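/- arXiv:1507.07352 — 5 statements merged into one kernel-verified Lean document; each statement's English description precedes it below -/
import Mathlib

section
/- On the 7-dimensional Lie algebra g with structure equations de¹ = e^{17}, de² = e^{27}, de³ = −e^{37}, de⁴ = −e^{47}, de⁵ = de⁶ = de⁷ = 0 (with respect to a basis {e¹,…,e⁷} of g*), the 3-form φ = e^{127} + e^{347} + e^{567} + e^{136} + e^{145} + e^{235} − e^{246} is closed: dφ = 0. -/
open Finset BigOperators

/-- Kronecker delta as a real number. -/
def kd {n : ℕ} (a i : Fin n) : ℝ := if a = i then 1 else 0

/-- The 2-form `e^a ∧ e^b` evaluated on basis vectors `e_i, e_j`. -/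
def pairF {n : ℕ} (a b i j : Fin n) : ℝ := kd a i * kd b j - kd a j * kd b i

/-- The 3-form `e^a ∧ e^b ∧ e^c` evaluated on basis vectors. -/
def tripF {n : ℕ} (a b c i j k : Fin n) : ℝ :=
  Matrix.det !![kd a i, kd a j, kd a k; kd b i, kd b j, kd b k; kd c i, kd c j, kd c k]

/-- The 4-form `e^a ∧ e^b ∧ e^c ∧ e^d` evaluated on basis vectors. -/
def quadF {n : ℕ} (a b c d i j k l : Fin n) : ℝ :=
  Matrix.det !![kd a i, kd a j, kd a k, kd a l;
                kd b i, kd b j, kd b k, kd b l;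
                kd c i, kd c j, kd c k, kd c l;
                kd d i, kd d j, kd d k, kd d l]

/-- Chevalley–Eilenberg differential of a 2-form, on basis vectors.
`br i a b` is the coefficient of `e_i` in `[e_a, e_b]`. -/
def d2 {n : ℕ} (br : Fin n → Fin n → Fin n → ℝ) (α : Fin n → Fin n → ℝ)
    (a b c : Fin n) : ℝ :=
  -(∑ m, br m a b * α m c) + (∑ m, br m a c * α m b) - (∑ m, br m b c * α m a)

/-- Chevalley–Eilenberg differential of a 3-form, on basis vectors. -/
def d3 {n : ℕ} (br : Fin n → Fin n → Fin n → ℝ) (α : Fin n → Fin n → Fin n → ℝ)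
    (a b c d : Fin n) : ℝ :=
  -(∑ m, br m a b * α m c d) + (∑ m, br m a c * α m b d) - (∑ m, br m a d * α m b c)
  - (∑ m, br m b c * α m a d) + (∑ m, br m b d * α m a c) - (∑ m, br m c d * α m a b)

/-- Chevalley–Eilenberg differential of a 4-form, on basis vectors. -/
def d4 {n : ℕ} (br : Fin n → Fin n → Fin n → ℝ)
    (α : Fin n → Fin n → Fin n → Fin n → ℝ) (a b c d e : Fin n) : ℝ :=
  -(∑ m, br m a b * α m c d e) + (∑ m, br m a c * α m b d e) - (∑ m, br m a d * α m b c e)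
  + (∑ m, br m a e * α m b c d) - (∑ m, br m b c * α m a d e) + (∑ m, br m b d * α m a c e)
  - (∑ m, br m b e * α m a c d) - (∑ m, br m c d * α m a b e) + (∑ m, br m c e * α m a b d)
  - (∑ m, br m d e * α m a b c)

/-- Wedge product of two 2-forms, evaluated on basis vectors. -/
def w22 {n : ℕ} (α β : Fin n → Fin n → ℝ) (i j k l : Fin n) : ℝ :=
  α i j * β k l - α i k * β j l + α i l * β j k
  + α j k * β i l - α j l * β i k + α k l * β i j

/-- Wedge product of a 2-form and a 1-form, evaluated on basis vectors. -/
def w21 {n : ℕ} (α : Fin n → Fin n → ℝ) (β : Fin n → ℝ) (i j k : Fin n) : ℝ :=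
  α i j * β k - α i k * β j + α j k * β i

/-- Wedge product of a 3-form and a 1-form, evaluated on basis vectors. -/
def w31 {n : ℕ} (α : Fin n → Fin n → Fin n → ℝ) (β : Fin n → ℝ) (i j k l : Fin n) : ℝ :=
  α i j k * β l - α i j l * β k + α i k l * β j - α j k l * β i

/-- `ω = e^{12} + e^{34} + e^{56}` (0-indexed). -/
def omega6 : Fin 6 → Fin 6 → ℝ := fun i j => pairF 0 1 i j + pairF 2 3 i j + pairF 4 5 i j

/-- `ψ₊ = e^{135} − e^{146} − e^{236} − e^{245}` (0-indexed). -/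
def psi6 : Fin 6 → Fin 6 → Fin 6 → ℝ := fun i j k =>
  tripF 0 2 4 i j k - tripF 0 3 5 i j k - tripF 1 2 5 i j k - tripF 1 3 4 i j k

/-- `ω` viewed on a 7-dimensional space (indices 0..5). -/
def omega7 : Fin 7 → Fin 7 → ℝ := fun i j => pairF 0 1 i j + pairF 2 3 i j + pairF 4 5 i j

/-- `ψ₊` viewed on a 7-dimensional space. -/
def psi7 : Fin 7 → Fin 7 → Fin 7 → ℝ := fun i j k =>
  tripF 0 2 4 i j k - tripF 0 3 5 i j k - tripF 1 2 5 i j k - tripF 1 3 4 i j k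

/-- `η = e^7`, the 1-form dual to the extra direction. -/
def eta7 : Fin 7 → ℝ := kd 6

/-- The real 6×6 representation of a complex 3×3 matrix: each entry `a+bi`
becomes the 2×2 block `[[a, b], [−b, a]]`. -/
def realRep (A : Matrix (Fin 3) (Fin 3) ℂ) : Matrix (Fin 6) (Fin 6) ℝ :=
  Matrix.of fun i j =>
    let p : Fin 3 := ⟨(i : ℕ) / 2, by have := i.isLt; omega⟩
    let q : Fin 3 := ⟨(j : ℕ) / 2, by have := j.isLt; omega⟩
    if (i : ℕ) % 2 = 0 then
      (if (j : ℕ) % 2 = 0 then (A p q).re else (A p q).im)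
    else
      (if (j : ℕ) % 2 = 0 then -(A p q).im else (A p q).re)

/-- Structure constants of the semidirect sum `g = h ⊕_D ℝξ`, where `f` are the
structure constants of `h` ( `f i a b` = coefficient of `e_i` in `[e_a,e_b]` ),
`ξ = e₇` and `[ξ, U] = D U`. -/
def brg (f : Fin 6 → Fin 6 → Fin 6 → ℝ) (D : Matrix (Fin 6) (Fin 6) ℝ) :
    Fin 7 → Fin 7 → Fin 7 → ℝ := fun i a b =>
  if hi : (i : ℕ) < 6 then
    if ha : (a : ℕ) < 6 then
      if hb : (b : ℕ) < 6 then f ⟨i, hi⟩ ⟨a, ha⟩ ⟨b, hb⟩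
      else -(D ⟨i, hi⟩ ⟨a, ha⟩)
    else
      if hb : (b : ℕ) < 6 then D ⟨i, hi⟩ ⟨b, hb⟩ else 0
  else 0

/-- Structure constants of `g = (e^{17}, e^{27}, −e^{37}, −e^{47}, 0, 0, 0)`:
`br2 i a b` is the coefficient of `e_i` in `[e_a, e_b]` (0-indexed). -/
def bb2 : Fin 7 → Fin 7 → Fin 7 → ℝ := fun i a b =>
  if i = 0 ∧ a = 0 ∧ b = 6 then -1
  else if i = 1 ∧ a = 1 ∧ b = 6 then -1
  else if i = 2 ∧ a = 2 ∧ b = 6 then 1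
  else if i = 3 ∧ a = 3 ∧ b = 6 then 1
  else 0

def br2 : Fin 7 → Fin 7 → Fin 7 → ℝ := fun i a b => bb2 i a b - bb2 i b a

/-- `φ = e^{127}+e^{347}+e^{567}+e^{136}+e^{145}+e^{235}−e^{246}` (0-indexed). -/
def phi2 : Fin 7 → Fin 7 → Fin 7 → ℝ := fun i j k =>
  tripF 0 1 6 i j k + tripF 2 3 6 i j k + tripF 4 5 6 i j k
    + tripF 0 2 5 i j k + tripF 0 3 4 i j k + tripF 1 2 4 i j k - tripF 1 3 5 i j k


def ikd (a i : Fin 7) : ℤ := if a = i then 1 else 0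

def itrip (a b c i j k : Fin 7) : ℤ :=
  ikd a i * ikd b j * ikd c k - ikd a i * ikd b k * ikd c j
  - ikd a j * ikd b i * ikd c k + ikd a j * ikd b k * ikd c i
  + ikd a k * ikd b i * ikd c j - ikd a k * ikd b j * ikd c i

def ibb : Fin 7 → Fin 7 → Fin 7 → ℤ := fun i a b =>
  if i = 0 ∧ a = 0 ∧ b = 6 then -1
  else if i = 1 ∧ a = 1 ∧ b = 6 then -1
  else if i = 2 ∧ a = 2 ∧ b = 6 then 1
  else if i = 3 ∧ a = 3 ∧ b = 6 then 1
  else 0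

def ibr : Fin 7 → Fin 7 → Fin 7 → ℤ := fun i a b => ibb i a b - ibb i b a

def iphi : Fin 7 → Fin 7 → Fin 7 → ℤ := fun i j k =>
  itrip 0 1 6 i j k + itrip 2 3 6 i j k + itrip 4 5 6 i j k
    + itrip 0 2 5 i j k + itrip 0 3 4 i j k + itrip 1 2 4 i j k - itrip 1 3 5 i j k

def id3 (a b c d : Fin 7) : ℤ :=
  -(∑ m, ibr m a b * iphi m c d) + (∑ m, ibr m a c * iphi m b d)
  - (∑ m, ibr m a d * iphi m b c) - (∑ m, ibr m b c * iphi m a d)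
  + (∑ m, ibr m b d * iphi m a c) - (∑ m, ibr m c d * iphi m a b)

lemma ikd_cast (a i : Fin 7) : ((ikd a i : ℤ) : ℝ) = kd a i := by
  simp [ikd, kd, apply_ite]

lemma itrip_cast (a b c i j k : Fin 7) :
    ((itrip a b c i j k : ℤ) : ℝ) = tripF a b c i j k := by
  simp only [tripF, Matrix.det_fin_three, Matrix.cons_val', Matrix.cons_val_zero,
    Matrix.cons_val_one, Matrix.head_cons, Matrix.empty_val', Matrix.cons_val_fin_one,
    Matrix.head_fin_const, Matrix.cons_val_two, Matrix.tail_cons, Matrix.of_apply]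
  push_cast [itrip, ikd_cast]
  ring

lemma iphi_cast (i j k : Fin 7) : ((iphi i j k : ℤ) : ℝ) = phi2 i j k := by
  push_cast [iphi, itrip_cast, phi2]
  ring

lemma ibb_cast (i a b : Fin 7) : ((ibb i a b : ℤ) : ℝ) = bb2 i a b := by
  unfold ibb bb2
  split_ifs <;> norm_num

lemma ibr_cast (i a b : Fin 7) : ((ibr i a b : ℤ) : ℝ) = br2 i a b := by
  push_cast [ibr, br2, ibb_cast]
  rfl

lemma id3_zero : ∀ a b c d : Fin 7, id3 a b c d = 0 := by decide

theorem stmt_2 : ∀ a b c d : Fin 7, d3 br2 phi2 a b c d = 0 := by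
  intro a b c d
  have h : d3 br2 phi2 a b c d = ((id3 a b c d : ℤ) : ℝ) := by
    simp only [d3, id3]
    push_cast [ibr_cast, iphi_cast]
    rfl
  rw [h, id3_zero]
  norm_num
end

section
/- On the 7-dimensional nilpotent Lie algebra g with structure equations de¹ = de² = 0, de³ = e^{17}, de⁴ = e^{15} + e^{27}, de⁵ = 0, de⁶ = e^{13}, de⁷ = 0, the G₂-form φ = e^{127} + e^{347} + e^{567} + e^{135} − e^{146} − e^{236} − e^{245} is closed: dφ = 0. -/
open Finset BigOperators

/-- Structure constants of `(0, 0, e^{17}, e^{15}+e^{27}, 0, e^{13}, 0)`. -/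
def bb4 : Fin 7 → Fin 7 → Fin 7 → ℝ := fun i a b =>
  if i = 2 ∧ a = 0 ∧ b = 6 then -1
  else if i = 3 ∧ a = 0 ∧ b = 4 then -1
  else if i = 3 ∧ a = 1 ∧ b = 6 then -1
  else if i = 5 ∧ a = 0 ∧ b = 2 then -1
  else 0

def br4 : Fin 7 → Fin 7 → Fin 7 → ℝ := fun i a b => bb4 i a b - bb4 i b a

/-- `φ = e^{127}+e^{347}+e^{567}+e^{135}−e^{146}−e^{236}−e^{245}` (0-indexed). -/
def phi4 : Fin 7 → Fin 7 → Fin 7 → ℝ := fun i j k =>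
  tripF 0 1 6 i j k + tripF 2 3 6 i j k + tripF 4 5 6 i j k + psi7 i j k


/-- Integer mirrors for kernel computation. -/
def kdZ {n : ℕ} (a i : Fin n) : ℤ := if a = i then 1 else 0

def tripZ {n : ℕ} (a b c i j k : Fin n) : ℤ :=
  kdZ a i * kdZ b j * kdZ c k - kdZ a i * kdZ b k * kdZ c j
  - kdZ a j * kdZ b i * kdZ c k + kdZ a j * kdZ b k * kdZ c i
  + kdZ a k * kdZ b i * kdZ c j - kdZ a k * kdZ b j * kdZ c i

def psiZ : Fin 7 → Fin 7 → Fin 7 → ℤ := fun i j k =>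
  tripZ 0 2 4 i j k - tripZ 0 3 5 i j k - tripZ 1 2 5 i j k - tripZ 1 3 4 i j k

def phiZ : Fin 7 → Fin 7 → Fin 7 → ℤ := fun i j k =>
  tripZ 0 1 6 i j k + tripZ 2 3 6 i j k + tripZ 4 5 6 i j k + psiZ i j k

def bbZ : Fin 7 → Fin 7 → Fin 7 → ℤ := fun i a b =>
  if i = 2 ∧ a = 0 ∧ b = 6 then -1
  else if i = 3 ∧ a = 0 ∧ b = 4 then -1
  else if i = 3 ∧ a = 1 ∧ b = 6 then -1
  else if i = 5 ∧ a = 0 ∧ b = 2 then -1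
  else 0

def brZ : Fin 7 → Fin 7 → Fin 7 → ℤ := fun i a b => bbZ i a b - bbZ i b a

def d3Z (a b c d : Fin 7) : ℤ :=
  -(∑ m, brZ m a b * phiZ m c d) + (∑ m, brZ m a c * phiZ m b d)
  - (∑ m, brZ m a d * phiZ m b c) - (∑ m, brZ m b c * phiZ m a d)
  + (∑ m, brZ m b d * phiZ m a c) - (∑ m, brZ m c d * phiZ m a b)

lemma kd_cast {n : ℕ} (a i : Fin n) : kd a i = (kdZ a i : ℝ) := by
  simp only [kd, kdZ]; split <;> simp

lemma tripF_cast {n : ℕ} (a b c i j k : Fin n) :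
    tripF a b c i j k = (tripZ a b c i j k : ℝ) := by
  simp [tripF, Matrix.det_fin_three, tripZ, kd_cast]
  try push_cast
  try ring

lemma phi4_cast (i j k : Fin 7) : phi4 i j k = (phiZ i j k : ℝ) := by
  simp only [phi4, psi7, phiZ, psiZ, tripF_cast]; push_cast; ring

lemma br4_cast (i a b : Fin 7) : br4 i a b = (brZ i a b : ℝ) := by
  simp only [br4, bb4, brZ, bbZ]
  push_cast
  split_ifs <;> norm_num

lemma d3_cast (a b c d : Fin 7) : d3 br4 phi4 a b c d = (d3Z a b c d : ℝ) := by
  simp only [d3, d3Z, br4_cast, phi4_cast]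
  push_cast
  ring

lemma d3Z_zero : ∀ a b c d : Fin 7, d3Z a b c d = 0 := by decide

theorem stmt_4 : ∀ a b c d : Fin 7, d3 br4 phi4 a b c d = 0 := by
  intro a b c d
  rw [d3_cast, d3Z_zero]
  norm_num
end

section
/- On the 6-dimensional nilpotent Lie algebra h with structure equations de¹ = de² = de³ = 0, de⁴ = e^{15}, de⁵ = 0, de⁶ = e^{13}, the pair ω = e^{12} + e^{34} + e^{56} and ψ₊ = e^{135} − e^{146} − e^{236} − e^{245} satisfies dω = 0 and dψ₊ = 0 (i.e., the SU(3)-structure is symplectic half-flat). -/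
open Finset BigOperators

/-- Structure constants of `h = (0, 0, 0, e^{15}, 0, e^{13})`. -/
def bb5 : Fin 6 → Fin 6 → Fin 6 → ℝ := fun i a b =>
  if i = 3 ∧ a = 0 ∧ b = 4 then -1
  else if i = 5 ∧ a = 0 ∧ b = 2 then -1
  else 0

def br5 : Fin 6 → Fin 6 → Fin 6 → ℝ := fun i a b => bb5 i a b - bb5 i b a


lemma sum_br5 (a b : Fin 6) (f : Fin 6 → ℝ) :
    ∑ m, br5 m a b * f m =
      (kd 4 a * kd 0 b - kd 0 a * kd 4 b) * f 3
      + (kd 2 a * kd 0 b - kd 0 a * kd 2 b) * f 5 := by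
  fin_cases a <;> fin_cases b <;>
    simp [Fin.sum_univ_six, br5, bb5, kd]

lemma tripF_eval {n : ℕ} (a b c i j k : Fin n) : tripF a b c i j k =
    kd a i * (kd b j * kd c k - kd b k * kd c j)
    - kd a j * (kd b i * kd c k - kd b k * kd c i)
    + kd a k * (kd b i * kd c j - kd b j * kd c i) := by
  simp [tripF, Matrix.det_fin_three]; ring

lemma kd03 : kd (0:Fin 6) 3 = 0 := rfl
lemma kd05 : kd (0:Fin 6) 5 = 0 := rfl
lemma kd13 : kd (1:Fin 6) 3 = 0 := rfl
lemma kd15 : kd (1:Fin 6) 5 = 0 := rfl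
lemma kd23 : kd (2:Fin 6) 3 = 0 := rfl
lemma kd25 : kd (2:Fin 6) 5 = 0 := rfl
lemma kd33 : kd (3:Fin 6) 3 = 1 := rfl
lemma kd35 : kd (3:Fin 6) 5 = 0 := rfl
lemma kd43 : kd (4:Fin 6) 3 = 0 := rfl
lemma kd45 : kd (4:Fin 6) 5 = 0 := rfl
lemma kd53 : kd (5:Fin 6) 3 = 0 := rfl
lemma kd55 : kd (5:Fin 6) 5 = 1 := rfl

/-- `(ω, ψ₊)` is symplectic half-flat on `h`: `dω = 0` and `dψ₊ = 0`. -/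
theorem stmt_5 :
    (∀ a b c : Fin 6, d2 br5 omega6 a b c = 0) ∧
    (∀ a b c d : Fin 6, d3 br5 psi6 a b c d = 0) := by
  constructor
  · intro a b c
    simp only [d2, sum_br5, omega6, pairF, kd03, kd05, kd13, kd15, kd23, kd25,
      kd33, kd35, kd43, kd45, kd53, kd55]
    ring
  · intro a b c d
    simp only [d3, sum_br5, psi6, tripF_eval, kd03, kd05, kd13, kd15, kd23, kd25,
      kd33, kd35, kd43, kd45, kd53, kd55]
    ring
end

section
/- On the 6-dimensional Lie algebra h with structure equations de¹ = e^{35} + e^{46}, de² = de³ = de⁴ = de⁵ = de⁶ = 0, the forms ω = e^{12} + e^{34} + e^{56} and ψ₊ = e^{135} − e^{146} − e^{236} − e^{245} satisfy d(ω ∧ ω) = 0 and dψ₊ = 0 (i.e., the structure is half-flat). -/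
open Finset BigOperators

/-- Structure constants of `h = (e^{35}+e^{46}, 0, 0, 0, 0, 0)`. -/
def bb6 : Fin 6 → Fin 6 → Fin 6 → ℝ := fun i a b =>
  if i = 0 ∧ a = 2 ∧ b = 4 then -1
  else if i = 0 ∧ a = 3 ∧ b = 5 then -1
  else 0

def br6 : Fin 6 → Fin 6 → Fin 6 → ℝ := fun i a b => bb6 i a b - bb6 i b a


/-- Auxiliary: explicit 3×3 determinant polynomial. -/
def hfDet3 {R : Type*} [CommRing R] (a b c d e f g h i : R) : R :=
  a*(e*i - f*h) - b*(d*i - f*g) + c*(d*h - e*g)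

/-- Auxiliary: explicit 4×4 determinant polynomial. -/
def hfDet4 {R : Type*} [CommRing R] (a b c d e f g h i j k l m n o p : R) : R :=
  a * hfDet3 f g h j k l n o p - b * hfDet3 e g h i k l m o p
  + c * hfDet3 e f h i j l m n p - d * hfDet3 e f g i j k m n o

theorem hf_det3_eq (a b c d e f g h i : ℝ) :
    Matrix.det !![a,b,c; d,e,f; g,h,i] = hfDet3 a b c d e f g h i := by
  simp [Matrix.det_fin_three, hfDet3]; ring

theorem hf_det4_eq (a b c d e f g h i j k l m n o p : ℝ) :
    Matrix.det !![a,b,c,d; e,f,g,h; i,j,k,l; m,n,o,p]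
      = hfDet4 a b c d e f g h i j k l m n o p := by
  rw [Matrix.det_succ_row_zero]
  simp [Fin.sum_univ_succ, Matrix.det_fin_three, hfDet3, hfDet4, Matrix.submatrix,
    Fin.succAbove, show Fin.castSucc (2:Fin 3) = (2:Fin 4) from rfl]
  ring

def hfKdZ {n : ℕ} (a i : Fin n) : ℤ := if a = i then 1 else 0
def hfTripZ {n : ℕ} (a b c i j k : Fin n) : ℤ :=
  hfDet3 (hfKdZ a i) (hfKdZ a j) (hfKdZ a k) (hfKdZ b i) (hfKdZ b j) (hfKdZ b k)
    (hfKdZ c i) (hfKdZ c j) (hfKdZ c k)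
def hfQuadZ {n : ℕ} (a b c d i j k l : Fin n) : ℤ :=
  hfDet4 (hfKdZ a i) (hfKdZ a j) (hfKdZ a k) (hfKdZ a l) (hfKdZ b i) (hfKdZ b j) (hfKdZ b k) (hfKdZ b l)
         (hfKdZ c i) (hfKdZ c j) (hfKdZ c k) (hfKdZ c l) (hfKdZ d i) (hfKdZ d j) (hfKdZ d k) (hfKdZ d l)
def hfPairZ {n : ℕ} (a b i j : Fin n) : ℤ := hfKdZ a i * hfKdZ b j - hfKdZ a j * hfKdZ b i
def hfOmegaZ : Fin 6 → Fin 6 → ℤ := fun i j => hfPairZ 0 1 i j + hfPairZ 2 3 i j + hfPairZ 4 5 i j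
def hfPsiZ : Fin 6 → Fin 6 → Fin 6 → ℤ := fun i j k =>
  hfTripZ 0 2 4 i j k - hfTripZ 0 3 5 i j k - hfTripZ 1 2 5 i j k - hfTripZ 1 3 4 i j k
def hfBbZ : Fin 6 → Fin 6 → Fin 6 → ℤ := fun i a b =>
  if i = 0 ∧ a = 2 ∧ b = 4 then -1
  else if i = 0 ∧ a = 3 ∧ b = 5 then -1
  else 0
def hfBrZ : Fin 6 → Fin 6 → Fin 6 → ℤ := fun i a b => hfBbZ i a b - hfBbZ i b a
def hfW22Z (i j k l : Fin 6) : ℤ :=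
  hfOmegaZ i j * hfOmegaZ k l - hfOmegaZ i k * hfOmegaZ j l + hfOmegaZ i l * hfOmegaZ j k
  + hfOmegaZ j k * hfOmegaZ i l - hfOmegaZ j l * hfOmegaZ i k + hfOmegaZ k l * hfOmegaZ i j
def hfD3Z (a b c d : Fin 6) : ℤ :=
  -(∑ m, hfBrZ m a b * hfPsiZ m c d) + (∑ m, hfBrZ m a c * hfPsiZ m b d)
  - (∑ m, hfBrZ m a d * hfPsiZ m b c) - (∑ m, hfBrZ m b c * hfPsiZ m a d)
  + (∑ m, hfBrZ m b d * hfPsiZ m a c) - (∑ m, hfBrZ m c d * hfPsiZ m a b)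
def hfD4Z (a b c d e : Fin 6) : ℤ :=
  -(∑ m, hfBrZ m a b * hfW22Z m c d e) + (∑ m, hfBrZ m a c * hfW22Z m b d e)
  - (∑ m, hfBrZ m a d * hfW22Z m b c e) + (∑ m, hfBrZ m a e * hfW22Z m b c d)
  - (∑ m, hfBrZ m b c * hfW22Z m a d e) + (∑ m, hfBrZ m b d * hfW22Z m a c e)
  - (∑ m, hfBrZ m b e * hfW22Z m a c d) - (∑ m, hfBrZ m c d * hfW22Z m a b e)
  + (∑ m, hfBrZ m c e * hfW22Z m a b d) - (∑ m, hfBrZ m d e * hfW22Z m a b c)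

theorem hf_kd_cast {n : ℕ} (a i : Fin n) : kd a i = ((hfKdZ a i : ℤ) : ℝ) := by
  unfold kd hfKdZ; split_ifs <;> norm_num

theorem hf_trip_cast {n : ℕ} (a b c i j k : Fin n) :
    tripF a b c i j k = ((hfTripZ a b c i j k : ℤ) : ℝ) := by
  rw [tripF, hf_det3_eq]
  simp only [hfTripZ, hfDet3, hf_kd_cast]; push_cast; ring

theorem hf_quad_cast {n : ℕ} (a b c d i j k l : Fin n) :
    quadF a b c d i j k l = ((hfQuadZ a b c d i j k l : ℤ) : ℝ) := by
  rw [quadF, hf_det4_eq]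
  simp only [hfQuadZ, hfDet4, hfDet3, hf_kd_cast]; push_cast; ring

theorem hf_omega_cast (i j : Fin 6) : omega6 i j = ((hfOmegaZ i j : ℤ) : ℝ) := by
  simp only [omega6, pairF, hfOmegaZ, hfPairZ, hf_kd_cast]; push_cast; ring

theorem hf_psi_cast (i j k : Fin 6) : psi6 i j k = ((hfPsiZ i j k : ℤ) : ℝ) := by
  simp only [psi6, hfPsiZ, hf_trip_cast]; push_cast; ring

theorem hf_br_cast (i a b : Fin 6) : br6 i a b = ((hfBrZ i a b : ℤ) : ℝ) := by
  simp only [br6, bb6, hfBrZ, hfBbZ]; split_ifs <;> push_cast <;> ring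

theorem hf_w22_cast (i j k l : Fin 6) :
    w22 omega6 omega6 i j k l = ((hfW22Z i j k l : ℤ) : ℝ) := by
  simp only [w22, hfW22Z, hf_omega_cast]; push_cast; ring

theorem hf_d4_cast (a b c d e : Fin 6) :
    d4 br6 (w22 omega6 omega6) a b c d e = ((hfD4Z a b c d e : ℤ) : ℝ) := by
  simp only [d4, hfD4Z, hf_br_cast, hf_w22_cast]; push_cast; ring

theorem hf_d3_cast (a b c d : Fin 6) :
    d3 br6 psi6 a b c d = ((hfD3Z a b c d : ℤ) : ℝ) := by
  simp only [d3, hfD3Z, hf_br_cast, hf_psi_cast]; push_cast; ring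

set_option maxRecDepth 100000 in
theorem hf_d3Z_zero : ∀ a b c d : Fin 6, hfD3Z a b c d = 0 := by decide

set_option maxRecDepth 100000 in
set_option maxHeartbeats 4000000 in
theorem hf_d4Z_zero : ∀ a b c d e : Fin 6, hfD4Z a b c d e = 0 := by decide

/-- `(ω, ψ₊)` is half-flat on `h`: `d(ω ∧ ω) = 0` and `dψ₊ = 0`. -/
theorem stmt_6 :
    (∀ a b c d e : Fin 6, d4 br6 (w22 omega6 omega6) a b c d e = 0) ∧
    (∀ a b c d : Fin 6, d3 br6 psi6 a b c d = 0) := by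
  refine ⟨fun a b c d e => ?_, fun a b c d => ?_⟩
  · rw [hf_d4_cast, hf_d4Z_zero]; norm_num
  · rw [hf_d3_cast, hf_d3Z_zero]; norm_num
end

section
/- Let h be a 6-dimensional Lie algebra with a basis {e₁,…,e₆} such that ω = e^{12}+e^{34}+e^{56} and ψ₊ = e^{135}−e^{146}−e^{236}−e^{245} are closed (symplectic half-flat), and let D be a derivation of h which, in this basis, is the real representation of some A ∈ sl(3,ℂ). Then on the semidirect sum Lie algebra g = h ⊕_D ℝξ (with bracket [ξ,U] = D(U) for U ∈ h, and the bracket of h on h), the 3-form φ = ω∧η + ψ₊ is closed, where η is the dual of ξ extended by zero on h. -/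
open Finset BigOperators

section struct
variable {n : ℕ} (br : Fin n → Fin n → Fin n → ℝ) (α : Fin n → Fin n → Fin n → ℝ)
  (hbr : ∀ m x y, br m x y = -br m y x) (hα : ∀ m x y, α m x y = -α m y x)

include hbr hα in
lemma d3_swap_ab (a b c d : Fin n) : d3 br α b a c d = -d3 br α a b c d := by
  simp only [d3,
    show ∀ m, br m b a = -br m a b from fun m => hbr m b a,
    show ∀ m, α m b a = -α m a b from fun m => hα m b a,
    neg_mul, mul_neg, Finset.sum_neg_distrib]
  ring

include hbr hα in
lemma d3_swap_bc (a b c d : Fin n) : d3 br α a c b d = -d3 br α a b c d := by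
  simp only [d3,
    show ∀ m, br m c b = -br m b c from fun m => hbr m c b,
    show ∀ m, α m c b = -α m b c from fun m => hα m c b,
    neg_mul, mul_neg, Finset.sum_neg_distrib]
  ring

include hbr hα in
lemma d3_swap_cd (a b c d : Fin n) : d3 br α a b d c = -d3 br α a b c d := by
  simp only [d3,
    show ∀ m, br m d c = -br m c d from fun m => hbr m d c,
    show ∀ m, α m d c = -α m c d from fun m => hα m d c,
    neg_mul, mul_neg, Finset.sum_neg_distrib]
  ring

include hbr hα in
lemma d3_ab (a c d : Fin n) : d3 br α a a c d = 0 := by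
  have := d3_swap_ab br α hbr hα a a c d; linarith

include hbr hα in
lemma d3_bc (a b d : Fin n) : d3 br α a b b d = 0 := by
  have := d3_swap_bc br α hbr hα a b b d; linarith

include hbr hα in
lemma d3_cd (a b c : Fin n) : d3 br α a b c c = 0 := by
  have := d3_swap_cd br α hbr hα a b c c; linarith
end struct

-- brg lemmas
variable (f : Fin 6 → Fin 6 → Fin 6 → ℝ) (D : Matrix (Fin 6) (Fin 6) ℝ)

lemma brg_last (a b : Fin 7) : brg f D (Fin.last 6) a b = 0 := by
  simp [brg]

lemma brg_cc (i a b : Fin 6) :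
    brg f D i.castSucc a.castSucc b.castSucc = f i a b := by
  simp [brg, Fin.is_lt]

lemma brg_cl (i a : Fin 6) :
    brg f D i.castSucc a.castSucc (Fin.last 6) = -(D i a) := by
  simp [brg, Fin.is_lt]

lemma brg_lc (i b : Fin 6) :
    brg f D i.castSucc (Fin.last 6) b.castSucc = D i b := by
  simp [brg, Fin.is_lt]

lemma brg_anti (hanti : ∀ i a b, f i a b = -f i b a) (m x y : Fin 7) :
    brg f D m x y = -brg f D m y x := by
  unfold brg
  by_cases hm : (m:ℕ) < 6
  · by_cases hx : (x:ℕ) < 6 <;> by_cases hy : (y:ℕ) < 6 <;>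
      simp only [hm, hx, hy, dif_pos, dif_neg, not_false_iff, neg_neg, neg_zero]
    · exact hanti _ _ _
  · simp only [hm, dif_neg, not_false_iff, neg_zero]

-- kd transfer
lemma kd_cc (a i : Fin 6) : kd (a.castSucc) (i.castSucc) = kd a i := by
  simp [kd, Fin.castSucc_inj]
lemma kd_cl (a : Fin 6) : kd (a.castSucc) (Fin.last 6) = 0 := by
  simp [kd, Fin.ext_iff]; omega
lemma kd_lc (a : Fin 6) : kd (Fin.last 6) (a.castSucc) = 0 := by
  simp [kd, Fin.ext_iff]; omega
lemma kd_ll : kd (Fin.last 6) (Fin.last 6) = 1 := by simp [kd]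

lemma tripFe {n : ℕ} (a b c i j k : Fin n) : tripF a b c i j k =
    kd a i*kd b j*kd c k - kd a i*kd b k*kd c j - kd a j*kd b i*kd c k
    + kd a j*kd b k*kd c i + kd a k*kd b i*kd c j - kd a k*kd b j*kd c i := by
  simp [tripF, Matrix.det_fin_three]

def phiG : Fin 7 → Fin 7 → Fin 7 → ℝ := fun i j k =>
  w21 omega7 eta7 i j k + psi7 i j k

lemma phi_alt (m x y : Fin 7) : phiG m x y = -phiG m y x := by
  simp only [phiG, psi7, w21, tripFe, omega7, pairF, eta7]; ring

lemma c7_0 : (0:Fin 7) = (0:Fin 6).castSucc := rfl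
lemma c7_1 : (1:Fin 7) = (1:Fin 6).castSucc := rfl
lemma c7_2 : (2:Fin 7) = (2:Fin 6).castSucc := rfl
lemma c7_3 : (3:Fin 7) = (3:Fin 6).castSucc := rfl
lemma c7_4 : (4:Fin 7) = (4:Fin 6).castSucc := rfl
lemma c7_5 : (5:Fin 7) = (5:Fin 6).castSucc := rfl
lemma c7_6 : (6:Fin 7) = Fin.last 6 := rfl

lemma phiE1 (i j k : Fin 6) :
    phiG i.castSucc j.castSucc k.castSucc = psi6 i j k := by
  simp only [phiG, psi7, psi6, w21, tripFe, omega7, omega6, pairF, eta7,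
    c7_0, c7_1, c7_2, c7_3, c7_4, c7_5, c7_6, kd_cc, kd_cl, kd_lc, kd_ll]
  ring

lemma phiE2 (i j : Fin 6) :
    phiG i.castSucc j.castSucc (Fin.last 6) = omega6 i j := by
  simp only [phiG, psi7, psi6, w21, tripFe, omega7, omega6, pairF, eta7,
    c7_0, c7_1, c7_2, c7_3, c7_4, c7_5, c7_6, kd_cc, kd_cl, kd_lc, kd_ll]
  ring

lemma caseA (a b c d : Fin 6) :
    d3 (brg f D) phiG a.castSucc b.castSucc c.castSucc d.castSucc
      = d3 f psi6 a b c d := by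
  simp only [d3, Fin.sum_univ_castSucc, brg_last, zero_mul, add_zero,
    brg_cc, phiE1]

lemma caseB (a b c : Fin 6) :
    d3 (brg f D) phiG a.castSucc b.castSucc c.castSucc (Fin.last 6)
      = d2 f omega6 a b c + ((∑ m, D m a * psi6 m b c)
        - (∑ m, D m b * psi6 m a c) + (∑ m, D m c * psi6 m a b)) := by
  simp only [d3, d2, Fin.sum_univ_castSucc, brg_last, zero_mul, add_zero,
    brg_cc, brg_cl, phiE1, phiE2, neg_mul, Finset.sum_neg_distrib]
  ring

lemma f60 (h : 0 < 6) : (⟨0,h⟩ : Fin 6) = 0 := rfl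
lemma f61 (h : 1 < 6) : (⟨1,h⟩ : Fin 6) = 1 := rfl
lemma f62 (h : 2 < 6) : (⟨2,h⟩ : Fin 6) = 2 := rfl
lemma f63 (h : 3 < 6) : (⟨3,h⟩ : Fin 6) = 3 := rfl
lemma f64 (h : 4 < 6) : (⟨4,h⟩ : Fin 6) = 4 := rfl
lemma f65 (h : 5 < 6) : (⟨5,h⟩ : Fin 6) = 5 := rfl
lemma ps000 : psi6 0 0 0 = 0 := by simp +decide [psi6, tripFe, kd]
lemma ps001 : psi6 0 0 1 = 0 := by simp +decide [psi6, tripFe, kd]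
lemma ps002 : psi6 0 0 2 = 0 := by simp +decide [psi6, tripFe, kd]
lemma ps003 : psi6 0 0 3 = 0 := by simp +decide [psi6, tripFe, kd]
lemma ps004 : psi6 0 0 4 = 0 := by simp +decide [psi6, tripFe, kd]
lemma ps005 : psi6 0 0 5 = 0 := by simp +decide [psi6, tripFe, kd]
lemma ps010 : psi6 0 1 0 = 0 := by simp +decide [psi6, tripFe, kd]
lemma ps011 : psi6 0 1 1 = 0 := by simp +decide [psi6, tripFe, kd]
lemma ps012 : psi6 0 1 2 = 0 := by simp +decide [psi6, tripFe, kd]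
lemma ps013 : psi6 0 1 3 = 0 := by simp +decide [psi6, tripFe, kd]
lemma ps014 : psi6 0 1 4 = 0 := by simp +decide [psi6, tripFe, kd]
lemma ps015 : psi6 0 1 5 = 0 := by simp +decide [psi6, tripFe, kd]
lemma ps020 : psi6 0 2 0 = 0 := by simp +decide [psi6, tripFe, kd]
lemma ps021 : psi6 0 2 1 = 0 := by simp +decide [psi6, tripFe, kd]
lemma ps022 : psi6 0 2 2 = 0 := by simp +decide [psi6, tripFe, kd]
lemma ps023 : psi6 0 2 3 = 0 := by simp +decide [psi6, tripFe, kd]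
lemma ps024 : psi6 0 2 4 = 1 := by simp +decide [psi6, tripFe, kd]
lemma ps025 : psi6 0 2 5 = 0 := by simp +decide [psi6, tripFe, kd]
lemma ps030 : psi6 0 3 0 = 0 := by simp +decide [psi6, tripFe, kd]
lemma ps031 : psi6 0 3 1 = 0 := by simp +decide [psi6, tripFe, kd]
lemma ps032 : psi6 0 3 2 = 0 := by simp +decide [psi6, tripFe, kd]
lemma ps033 : psi6 0 3 3 = 0 := by simp +decide [psi6, tripFe, kd]
lemma ps034 : psi6 0 3 4 = 0 := by simp +decide [psi6, tripFe, kd]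
lemma ps035 : psi6 0 3 5 = (-1) := by simp +decide [psi6, tripFe, kd]
lemma ps040 : psi6 0 4 0 = 0 := by simp +decide [psi6, tripFe, kd]
lemma ps041 : psi6 0 4 1 = 0 := by simp +decide [psi6, tripFe, kd]
lemma ps042 : psi6 0 4 2 = (-1) := by simp +decide [psi6, tripFe, kd]
lemma ps043 : psi6 0 4 3 = 0 := by simp +decide [psi6, tripFe, kd]
lemma ps044 : psi6 0 4 4 = 0 := by simp +decide [psi6, tripFe, kd]
lemma ps045 : psi6 0 4 5 = 0 := by simp +decide [psi6, tripFe, kd]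
lemma ps050 : psi6 0 5 0 = 0 := by simp +decide [psi6, tripFe, kd]
lemma ps051 : psi6 0 5 1 = 0 := by simp +decide [psi6, tripFe, kd]
lemma ps052 : psi6 0 5 2 = 0 := by simp +decide [psi6, tripFe, kd]
lemma ps053 : psi6 0 5 3 = 1 := by simp +decide [psi6, tripFe, kd]
lemma ps054 : psi6 0 5 4 = 0 := by simp +decide [psi6, tripFe, kd]
lemma ps055 : psi6 0 5 5 = 0 := by simp +decide [psi6, tripFe, kd]
lemma ps100 : psi6 1 0 0 = 0 := by simp +decide [psi6, tripFe, kd]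
lemma ps101 : psi6 1 0 1 = 0 := by simp +decide [psi6, tripFe, kd]
lemma ps102 : psi6 1 0 2 = 0 := by simp +decide [psi6, tripFe, kd]
lemma ps103 : psi6 1 0 3 = 0 := by simp +decide [psi6, tripFe, kd]
lemma ps104 : psi6 1 0 4 = 0 := by simp +decide [psi6, tripFe, kd]
lemma ps105 : psi6 1 0 5 = 0 := by simp +decide [psi6, tripFe, kd]
lemma ps110 : psi6 1 1 0 = 0 := by simp +decide [psi6, tripFe, kd]
lemma ps111 : psi6 1 1 1 = 0 := by simp +decide [psi6, tripFe, kd]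
lemma ps112 : psi6 1 1 2 = 0 := by simp +decide [psi6, tripFe, kd]
lemma ps113 : psi6 1 1 3 = 0 := by simp +decide [psi6, tripFe, kd]
lemma ps114 : psi6 1 1 4 = 0 := by simp +decide [psi6, tripFe, kd]
lemma ps115 : psi6 1 1 5 = 0 := by simp +decide [psi6, tripFe, kd]
lemma ps120 : psi6 1 2 0 = 0 := by simp +decide [psi6, tripFe, kd]
lemma ps121 : psi6 1 2 1 = 0 := by simp +decide [psi6, tripFe, kd]
lemma ps122 : psi6 1 2 2 = 0 := by simp +decide [psi6, tripFe, kd]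
lemma ps123 : psi6 1 2 3 = 0 := by simp +decide [psi6, tripFe, kd]
lemma ps124 : psi6 1 2 4 = 0 := by simp +decide [psi6, tripFe, kd]
lemma ps125 : psi6 1 2 5 = (-1) := by simp +decide [psi6, tripFe, kd]
lemma ps130 : psi6 1 3 0 = 0 := by simp +decide [psi6, tripFe, kd]
lemma ps131 : psi6 1 3 1 = 0 := by simp +decide [psi6, tripFe, kd]
lemma ps132 : psi6 1 3 2 = 0 := by simp +decide [psi6, tripFe, kd]
lemma ps133 : psi6 1 3 3 = 0 := by simp +decide [psi6, tripFe, kd]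
lemma ps134 : psi6 1 3 4 = (-1) := by simp +decide [psi6, tripFe, kd]
lemma ps135 : psi6 1 3 5 = 0 := by simp +decide [psi6, tripFe, kd]
lemma ps140 : psi6 1 4 0 = 0 := by simp +decide [psi6, tripFe, kd]
lemma ps141 : psi6 1 4 1 = 0 := by simp +decide [psi6, tripFe, kd]
lemma ps142 : psi6 1 4 2 = 0 := by simp +decide [psi6, tripFe, kd]
lemma ps143 : psi6 1 4 3 = 1 := by simp +decide [psi6, tripFe, kd]
lemma ps144 : psi6 1 4 4 = 0 := by simp +decide [psi6, tripFe, kd]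
lemma ps145 : psi6 1 4 5 = 0 := by simp +decide [psi6, tripFe, kd]
lemma ps150 : psi6 1 5 0 = 0 := by simp +decide [psi6, tripFe, kd]
lemma ps151 : psi6 1 5 1 = 0 := by simp +decide [psi6, tripFe, kd]
lemma ps152 : psi6 1 5 2 = 1 := by simp +decide [psi6, tripFe, kd]
lemma ps153 : psi6 1 5 3 = 0 := by simp +decide [psi6, tripFe, kd]
lemma ps154 : psi6 1 5 4 = 0 := by simp +decide [psi6, tripFe, kd]
lemma ps155 : psi6 1 5 5 = 0 := by simp +decide [psi6, tripFe, kd]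
lemma ps200 : psi6 2 0 0 = 0 := by simp +decide [psi6, tripFe, kd]
lemma ps201 : psi6 2 0 1 = 0 := by simp +decide [psi6, tripFe, kd]
lemma ps202 : psi6 2 0 2 = 0 := by simp +decide [psi6, tripFe, kd]
lemma ps203 : psi6 2 0 3 = 0 := by simp +decide [psi6, tripFe, kd]
lemma ps204 : psi6 2 0 4 = (-1) := by simp +decide [psi6, tripFe, kd]
lemma ps205 : psi6 2 0 5 = 0 := by simp +decide [psi6, tripFe, kd]
lemma ps210 : psi6 2 1 0 = 0 := by simp +decide [psi6, tripFe, kd]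
lemma ps211 : psi6 2 1 1 = 0 := by simp +decide [psi6, tripFe, kd]
lemma ps212 : psi6 2 1 2 = 0 := by simp +decide [psi6, tripFe, kd]
lemma ps213 : psi6 2 1 3 = 0 := by simp +decide [psi6, tripFe, kd]
lemma ps214 : psi6 2 1 4 = 0 := by simp +decide [psi6, tripFe, kd]
lemma ps215 : psi6 2 1 5 = 1 := by simp +decide [psi6, tripFe, kd]
lemma ps220 : psi6 2 2 0 = 0 := by simp +decide [psi6, tripFe, kd]
lemma ps221 : psi6 2 2 1 = 0 := by simp +decide [psi6, tripFe, kd]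
lemma ps222 : psi6 2 2 2 = 0 := by simp +decide [psi6, tripFe, kd]
lemma ps223 : psi6 2 2 3 = 0 := by simp +decide [psi6, tripFe, kd]
lemma ps224 : psi6 2 2 4 = 0 := by simp +decide [psi6, tripFe, kd]
lemma ps225 : psi6 2 2 5 = 0 := by simp +decide [psi6, tripFe, kd]
lemma ps230 : psi6 2 3 0 = 0 := by simp +decide [psi6, tripFe, kd]
lemma ps231 : psi6 2 3 1 = 0 := by simp +decide [psi6, tripFe, kd]
lemma ps232 : psi6 2 3 2 = 0 := by simp +decide [psi6, tripFe, kd]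
lemma ps233 : psi6 2 3 3 = 0 := by simp +decide [psi6, tripFe, kd]
lemma ps234 : psi6 2 3 4 = 0 := by simp +decide [psi6, tripFe, kd]
lemma ps235 : psi6 2 3 5 = 0 := by simp +decide [psi6, tripFe, kd]
lemma ps240 : psi6 2 4 0 = 1 := by simp +decide [psi6, tripFe, kd]
lemma ps241 : psi6 2 4 1 = 0 := by simp +decide [psi6, tripFe, kd]
lemma ps242 : psi6 2 4 2 = 0 := by simp +decide [psi6, tripFe, kd]
lemma ps243 : psi6 2 4 3 = 0 := by simp +decide [psi6, tripFe, kd]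
lemma ps244 : psi6 2 4 4 = 0 := by simp +decide [psi6, tripFe, kd]
lemma ps245 : psi6 2 4 5 = 0 := by simp +decide [psi6, tripFe, kd]
lemma ps250 : psi6 2 5 0 = 0 := by simp +decide [psi6, tripFe, kd]
lemma ps251 : psi6 2 5 1 = (-1) := by simp +decide [psi6, tripFe, kd]
lemma ps252 : psi6 2 5 2 = 0 := by simp +decide [psi6, tripFe, kd]
lemma ps253 : psi6 2 5 3 = 0 := by simp +decide [psi6, tripFe, kd]
lemma ps254 : psi6 2 5 4 = 0 := by simp +decide [psi6, tripFe, kd]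
lemma ps255 : psi6 2 5 5 = 0 := by simp +decide [psi6, tripFe, kd]
lemma ps300 : psi6 3 0 0 = 0 := by simp +decide [psi6, tripFe, kd]
lemma ps301 : psi6 3 0 1 = 0 := by simp +decide [psi6, tripFe, kd]
lemma ps302 : psi6 3 0 2 = 0 := by simp +decide [psi6, tripFe, kd]
lemma ps303 : psi6 3 0 3 = 0 := by simp +decide [psi6, tripFe, kd]
lemma ps304 : psi6 3 0 4 = 0 := by simp +decide [psi6, tripFe, kd]
lemma ps305 : psi6 3 0 5 = 1 := by simp +decide [psi6, tripFe, kd]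
lemma ps310 : psi6 3 1 0 = 0 := by simp +decide [psi6, tripFe, kd]
lemma ps311 : psi6 3 1 1 = 0 := by simp +decide [psi6, tripFe, kd]
lemma ps312 : psi6 3 1 2 = 0 := by simp +decide [psi6, tripFe, kd]
lemma ps313 : psi6 3 1 3 = 0 := by simp +decide [psi6, tripFe, kd]
lemma ps314 : psi6 3 1 4 = 1 := by simp +decide [psi6, tripFe, kd]
lemma ps315 : psi6 3 1 5 = 0 := by simp +decide [psi6, tripFe, kd]
lemma ps320 : psi6 3 2 0 = 0 := by simp +decide [psi6, tripFe, kd]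
lemma ps321 : psi6 3 2 1 = 0 := by simp +decide [psi6, tripFe, kd]
lemma ps322 : psi6 3 2 2 = 0 := by simp +decide [psi6, tripFe, kd]
lemma ps323 : psi6 3 2 3 = 0 := by simp +decide [psi6, tripFe, kd]
lemma ps324 : psi6 3 2 4 = 0 := by simp +decide [psi6, tripFe, kd]
lemma ps325 : psi6 3 2 5 = 0 := by simp +decide [psi6, tripFe, kd]
lemma ps330 : psi6 3 3 0 = 0 := by simp +decide [psi6, tripFe, kd]
lemma ps331 : psi6 3 3 1 = 0 := by simp +decide [psi6, tripFe, kd]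
lemma ps332 : psi6 3 3 2 = 0 := by simp +decide [psi6, tripFe, kd]
lemma ps333 : psi6 3 3 3 = 0 := by simp +decide [psi6, tripFe, kd]
lemma ps334 : psi6 3 3 4 = 0 := by simp +decide [psi6, tripFe, kd]
lemma ps335 : psi6 3 3 5 = 0 := by simp +decide [psi6, tripFe, kd]
lemma ps340 : psi6 3 4 0 = 0 := by simp +decide [psi6, tripFe, kd]
lemma ps341 : psi6 3 4 1 = (-1) := by simp +decide [psi6, tripFe, kd]
lemma ps342 : psi6 3 4 2 = 0 := by simp +decide [psi6, tripFe, kd]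
lemma ps343 : psi6 3 4 3 = 0 := by simp +decide [psi6, tripFe, kd]
lemma ps344 : psi6 3 4 4 = 0 := by simp +decide [psi6, tripFe, kd]
lemma ps345 : psi6 3 4 5 = 0 := by simp +decide [psi6, tripFe, kd]
lemma ps350 : psi6 3 5 0 = (-1) := by simp +decide [psi6, tripFe, kd]
lemma ps351 : psi6 3 5 1 = 0 := by simp +decide [psi6, tripFe, kd]
lemma ps352 : psi6 3 5 2 = 0 := by simp +decide [psi6, tripFe, kd]
lemma ps353 : psi6 3 5 3 = 0 := by simp +decide [psi6, tripFe, kd]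
lemma ps354 : psi6 3 5 4 = 0 := by simp +decide [psi6, tripFe, kd]
lemma ps355 : psi6 3 5 5 = 0 := by simp +decide [psi6, tripFe, kd]
lemma ps400 : psi6 4 0 0 = 0 := by simp +decide [psi6, tripFe, kd]
lemma ps401 : psi6 4 0 1 = 0 := by simp +decide [psi6, tripFe, kd]
lemma ps402 : psi6 4 0 2 = 1 := by simp +decide [psi6, tripFe, kd]
lemma ps403 : psi6 4 0 3 = 0 := by simp +decide [psi6, tripFe, kd]
lemma ps404 : psi6 4 0 4 = 0 := by simp +decide [psi6, tripFe, kd]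
lemma ps405 : psi6 4 0 5 = 0 := by simp +decide [psi6, tripFe, kd]
lemma ps410 : psi6 4 1 0 = 0 := by simp +decide [psi6, tripFe, kd]
lemma ps411 : psi6 4 1 1 = 0 := by simp +decide [psi6, tripFe, kd]
lemma ps412 : psi6 4 1 2 = 0 := by simp +decide [psi6, tripFe, kd]
lemma ps413 : psi6 4 1 3 = (-1) := by simp +decide [psi6, tripFe, kd]
lemma ps414 : psi6 4 1 4 = 0 := by simp +decide [psi6, tripFe, kd]
lemma ps415 : psi6 4 1 5 = 0 := by simp +decide [psi6, tripFe, kd]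
lemma ps420 : psi6 4 2 0 = (-1) := by simp +decide [psi6, tripFe, kd]
lemma ps421 : psi6 4 2 1 = 0 := by simp +decide [psi6, tripFe, kd]
lemma ps422 : psi6 4 2 2 = 0 := by simp +decide [psi6, tripFe, kd]
lemma ps423 : psi6 4 2 3 = 0 := by simp +decide [psi6, tripFe, kd]
lemma ps424 : psi6 4 2 4 = 0 := by simp +decide [psi6, tripFe, kd]
lemma ps425 : psi6 4 2 5 = 0 := by simp +decide [psi6, tripFe, kd]
lemma ps430 : psi6 4 3 0 = 0 := by simp +decide [psi6, tripFe, kd]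
lemma ps431 : psi6 4 3 1 = 1 := by simp +decide [psi6, tripFe, kd]
lemma ps432 : psi6 4 3 2 = 0 := by simp +decide [psi6, tripFe, kd]
lemma ps433 : psi6 4 3 3 = 0 := by simp +decide [psi6, tripFe, kd]
lemma ps434 : psi6 4 3 4 = 0 := by simp +decide [psi6, tripFe, kd]
lemma ps435 : psi6 4 3 5 = 0 := by simp +decide [psi6, tripFe, kd]
lemma ps440 : psi6 4 4 0 = 0 := by simp +decide [psi6, tripFe, kd]
lemma ps441 : psi6 4 4 1 = 0 := by simp +decide [psi6, tripFe, kd]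
lemma ps442 : psi6 4 4 2 = 0 := by simp +decide [psi6, tripFe, kd]
lemma ps443 : psi6 4 4 3 = 0 := by simp +decide [psi6, tripFe, kd]
lemma ps444 : psi6 4 4 4 = 0 := by simp +decide [psi6, tripFe, kd]
lemma ps445 : psi6 4 4 5 = 0 := by simp +decide [psi6, tripFe, kd]
lemma ps450 : psi6 4 5 0 = 0 := by simp +decide [psi6, tripFe, kd]
lemma ps451 : psi6 4 5 1 = 0 := by simp +decide [psi6, tripFe, kd]
lemma ps452 : psi6 4 5 2 = 0 := by simp +decide [psi6, tripFe, kd]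
lemma ps453 : psi6 4 5 3 = 0 := by simp +decide [psi6, tripFe, kd]
lemma ps454 : psi6 4 5 4 = 0 := by simp +decide [psi6, tripFe, kd]
lemma ps455 : psi6 4 5 5 = 0 := by simp +decide [psi6, tripFe, kd]
lemma ps500 : psi6 5 0 0 = 0 := by simp +decide [psi6, tripFe, kd]
lemma ps501 : psi6 5 0 1 = 0 := by simp +decide [psi6, tripFe, kd]
lemma ps502 : psi6 5 0 2 = 0 := by simp +decide [psi6, tripFe, kd]
lemma ps503 : psi6 5 0 3 = (-1) := by simp +decide [psi6, tripFe, kd]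
lemma ps504 : psi6 5 0 4 = 0 := by simp +decide [psi6, tripFe, kd]
lemma ps505 : psi6 5 0 5 = 0 := by simp +decide [psi6, tripFe, kd]
lemma ps510 : psi6 5 1 0 = 0 := by simp +decide [psi6, tripFe, kd]
lemma ps511 : psi6 5 1 1 = 0 := by simp +decide [psi6, tripFe, kd]
lemma ps512 : psi6 5 1 2 = (-1) := by simp +decide [psi6, tripFe, kd]
lemma ps513 : psi6 5 1 3 = 0 := by simp +decide [psi6, tripFe, kd]
lemma ps514 : psi6 5 1 4 = 0 := by simp +decide [psi6, tripFe, kd]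
lemma ps515 : psi6 5 1 5 = 0 := by simp +decide [psi6, tripFe, kd]
lemma ps520 : psi6 5 2 0 = 0 := by simp +decide [psi6, tripFe, kd]
lemma ps521 : psi6 5 2 1 = 1 := by simp +decide [psi6, tripFe, kd]
lemma ps522 : psi6 5 2 2 = 0 := by simp +decide [psi6, tripFe, kd]
lemma ps523 : psi6 5 2 3 = 0 := by simp +decide [psi6, tripFe, kd]
lemma ps524 : psi6 5 2 4 = 0 := by simp +decide [psi6, tripFe, kd]
lemma ps525 : psi6 5 2 5 = 0 := by simp +decide [psi6, tripFe, kd]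
lemma ps530 : psi6 5 3 0 = 1 := by simp +decide [psi6, tripFe, kd]
lemma ps531 : psi6 5 3 1 = 0 := by simp +decide [psi6, tripFe, kd]
lemma ps532 : psi6 5 3 2 = 0 := by simp +decide [psi6, tripFe, kd]
lemma ps533 : psi6 5 3 3 = 0 := by simp +decide [psi6, tripFe, kd]
lemma ps534 : psi6 5 3 4 = 0 := by simp +decide [psi6, tripFe, kd]
lemma ps535 : psi6 5 3 5 = 0 := by simp +decide [psi6, tripFe, kd]
lemma ps540 : psi6 5 4 0 = 0 := by simp +decide [psi6, tripFe, kd]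
lemma ps541 : psi6 5 4 1 = 0 := by simp +decide [psi6, tripFe, kd]
lemma ps542 : psi6 5 4 2 = 0 := by simp +decide [psi6, tripFe, kd]
lemma ps543 : psi6 5 4 3 = 0 := by simp +decide [psi6, tripFe, kd]
lemma ps544 : psi6 5 4 4 = 0 := by simp +decide [psi6, tripFe, kd]
lemma ps545 : psi6 5 4 5 = 0 := by simp +decide [psi6, tripFe, kd]
lemma ps550 : psi6 5 5 0 = 0 := by simp +decide [psi6, tripFe, kd]
lemma ps551 : psi6 5 5 1 = 0 := by simp +decide [psi6, tripFe, kd]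
lemma ps552 : psi6 5 5 2 = 0 := by simp +decide [psi6, tripFe, kd]
lemma ps553 : psi6 5 5 3 = 0 := by simp +decide [psi6, tripFe, kd]
lemma ps554 : psi6 5 5 4 = 0 := by simp +decide [psi6, tripFe, kd]
lemma ps555 : psi6 5 5 5 = 0 := by simp +decide [psi6, tripFe, kd]
lemma rr00 (A : Matrix (Fin 3) (Fin 3) ℂ) : realRep A 0 0 = (A 0 0).re := rfl
lemma rr01 (A : Matrix (Fin 3) (Fin 3) ℂ) : realRep A 0 1 = (A 0 0).im := rfl
lemma rr02 (A : Matrix (Fin 3) (Fin 3) ℂ) : realRep A 0 2 = (A 0 1).re := rfl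
lemma rr03 (A : Matrix (Fin 3) (Fin 3) ℂ) : realRep A 0 3 = (A 0 1).im := rfl
lemma rr04 (A : Matrix (Fin 3) (Fin 3) ℂ) : realRep A 0 4 = (A 0 2).re := rfl
lemma rr05 (A : Matrix (Fin 3) (Fin 3) ℂ) : realRep A 0 5 = (A 0 2).im := rfl
lemma rr10 (A : Matrix (Fin 3) (Fin 3) ℂ) : realRep A 1 0 = -(A 0 0).im := rfl
lemma rr11 (A : Matrix (Fin 3) (Fin 3) ℂ) : realRep A 1 1 = (A 0 0).re := rfl
lemma rr12 (A : Matrix (Fin 3) (Fin 3) ℂ) : realRep A 1 2 = -(A 0 1).im := rfl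
lemma rr13 (A : Matrix (Fin 3) (Fin 3) ℂ) : realRep A 1 3 = (A 0 1).re := rfl
lemma rr14 (A : Matrix (Fin 3) (Fin 3) ℂ) : realRep A 1 4 = -(A 0 2).im := rfl
lemma rr15 (A : Matrix (Fin 3) (Fin 3) ℂ) : realRep A 1 5 = (A 0 2).re := rfl
lemma rr20 (A : Matrix (Fin 3) (Fin 3) ℂ) : realRep A 2 0 = (A 1 0).re := rfl
lemma rr21 (A : Matrix (Fin 3) (Fin 3) ℂ) : realRep A 2 1 = (A 1 0).im := rfl
lemma rr22 (A : Matrix (Fin 3) (Fin 3) ℂ) : realRep A 2 2 = (A 1 1).re := rfl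
lemma rr23 (A : Matrix (Fin 3) (Fin 3) ℂ) : realRep A 2 3 = (A 1 1).im := rfl
lemma rr24 (A : Matrix (Fin 3) (Fin 3) ℂ) : realRep A 2 4 = (A 1 2).re := rfl
lemma rr25 (A : Matrix (Fin 3) (Fin 3) ℂ) : realRep A 2 5 = (A 1 2).im := rfl
lemma rr30 (A : Matrix (Fin 3) (Fin 3) ℂ) : realRep A 3 0 = -(A 1 0).im := rfl
lemma rr31 (A : Matrix (Fin 3) (Fin 3) ℂ) : realRep A 3 1 = (A 1 0).re := rfl
lemma rr32 (A : Matrix (Fin 3) (Fin 3) ℂ) : realRep A 3 2 = -(A 1 1).im := rfl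
lemma rr33 (A : Matrix (Fin 3) (Fin 3) ℂ) : realRep A 3 3 = (A 1 1).re := rfl
lemma rr34 (A : Matrix (Fin 3) (Fin 3) ℂ) : realRep A 3 4 = -(A 1 2).im := rfl
lemma rr35 (A : Matrix (Fin 3) (Fin 3) ℂ) : realRep A 3 5 = (A 1 2).re := rfl
lemma rr40 (A : Matrix (Fin 3) (Fin 3) ℂ) : realRep A 4 0 = (A 2 0).re := rfl
lemma rr41 (A : Matrix (Fin 3) (Fin 3) ℂ) : realRep A 4 1 = (A 2 0).im := rfl
lemma rr42 (A : Matrix (Fin 3) (Fin 3) ℂ) : realRep A 4 2 = (A 2 1).re := rfl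
lemma rr43 (A : Matrix (Fin 3) (Fin 3) ℂ) : realRep A 4 3 = (A 2 1).im := rfl
lemma rr44 (A : Matrix (Fin 3) (Fin 3) ℂ) : realRep A 4 4 = (A 2 2).re := rfl
lemma rr45 (A : Matrix (Fin 3) (Fin 3) ℂ) : realRep A 4 5 = (A 2 2).im := rfl
lemma rr50 (A : Matrix (Fin 3) (Fin 3) ℂ) : realRep A 5 0 = -(A 2 0).im := rfl
lemma rr51 (A : Matrix (Fin 3) (Fin 3) ℂ) : realRep A 5 1 = (A 2 0).re := rfl
lemma rr52 (A : Matrix (Fin 3) (Fin 3) ℂ) : realRep A 5 2 = -(A 2 1).im := rfl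
lemma rr53 (A : Matrix (Fin 3) (Fin 3) ℂ) : realRep A 5 3 = (A 2 1).re := rfl
lemma rr54 (A : Matrix (Fin 3) (Fin 3) ℂ) : realRep A 5 4 = -(A 2 2).im := rfl
lemma rr55 (A : Matrix (Fin 3) (Fin 3) ℂ) : realRep A 5 5 = (A 2 2).re := rfl

set_option maxHeartbeats 4000000 in
lemma key (A : Matrix (Fin 3) (Fin 3) ℂ)
    (hre : (A 0 0).re + (A 1 1).re + (A 2 2).re = 0)
    (him : (A 0 0).im + (A 1 1).im + (A 2 2).im = 0) (a b c : Fin 6) :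
    (∑ m, realRep A m a * psi6 m b c) - (∑ m, realRep A m b * psi6 m a c)
      + (∑ m, realRep A m c * psi6 m a b) = 0 := by
  fin_cases a <;> fin_cases b <;> fin_cases c <;>
    simp only [f60,f61,f62,f63,f64,f65, Fin.isValue, Fin.sum_univ_six, ps000,ps001,ps002,ps003,ps004,ps005,ps010,ps011,ps012,ps013,ps014,ps015,ps020,ps021,ps022,ps023,ps024,ps025,ps030,ps031,ps032,ps033,ps034,ps035,ps040,ps041,ps042,ps043,ps044,ps045,ps050,ps051,ps052,ps053,ps054,ps055,ps100,ps101,ps102,ps103,ps104,ps105,ps110,ps111,ps112,ps113,ps114,ps115,ps120,ps121,ps122,ps123,ps124,ps125,ps130,ps131,ps132,ps133,ps134,ps135,ps140,ps141,ps142,ps143,ps144,ps145,ps150,ps151,ps152,ps153,ps154,ps155,ps200,ps201,ps202,ps203,ps204,ps205,ps210,ps211,ps212,ps213,ps214,ps215,ps220,ps221,ps222,ps223,ps224,ps225,ps230,ps231,ps232,ps233,ps234,ps235,ps240,ps241,ps242,ps243,ps244,ps245,ps250,ps251,ps252,ps253,ps254,ps255,ps300,ps301,ps302,ps303,ps304,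ps305,ps310,ps311,ps312,ps313,ps314,ps315,ps320,ps321,ps322,ps323,ps324,ps325,ps330,ps331,ps332,ps333,ps334,ps335,ps340,ps341,ps342,ps343,ps344,ps345,ps350,ps351,ps352,ps353,ps354,ps355,ps400,ps401,ps402,ps403,ps404,ps405,ps410,ps411,ps412,ps413,ps414,ps415,ps420,ps421,ps422,ps423,ps424,ps425,ps430,ps431,ps432,ps433,ps434,ps435,ps440,ps441,ps442,ps443,ps444,ps445,ps450,ps451,ps452,ps453,ps454,ps455,ps500,ps501,ps502,ps503,ps504,ps505,ps510,ps511,ps512,ps513,ps514,ps515,ps520,ps521,ps522,ps523,ps524,ps525,ps530,ps531,ps532,ps533,ps534,ps535,ps540,ps541,ps542,ps543,ps544,ps545,ps550,ps551,ps552,ps553,ps554,ps555, rr00,rr01,rr02,rr03,rr04,rr05,rr10,rr11,rr12,rr13,rr14,rr15,rr20,rr21,rr22,rr23,rr24,rr25,rr30,rr31,rr32,rr33,rr34,rr35,rr40,rr41,rr42,rr43,rr44,rr45,rr50,rr51,rr52,rr53,rr54,rr55, mul_zero, mul_one, mul_neg, neg_neg,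
      add_zero, zero_add, sub_zero, zero_sub, neg_zero, sub_self, neg_add_rev, sub_neg_eq_add] <;>
    linarith

/-- If `h` is a 6-dimensional Lie algebra (structure constants `f`) on which
`ω = e^{12}+e^{34}+e^{56}` and `ψ₊ = e^{135}−e^{146}−e^{236}−e^{245}` are closed
(symplectic half-flat), and `D` is a derivation of `h` which is the real
representation of some traceless `A ∈ sl(3,ℂ)`, then on `g = h ⊕_D ℝξ`
the 3-form `φ = ω∧η + ψ₊` is closed. -/
theorem stmt_9 (f : Fin 6 → Fin 6 → Fin 6 → ℝ)
    (hanti : ∀ i a b, f i a b = -f i b a)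
    (hjac : ∀ i a b c : Fin 6,
      (∑ m, f i m c * f m a b) + (∑ m, f i m a * f m b c) + (∑ m, f i m b * f m c a) = 0)
    (homega : ∀ a b c : Fin 6, d2 f omega6 a b c = 0)
    (hpsi : ∀ a b c d : Fin 6, d3 f psi6 a b c d = 0)
    (D : Matrix (Fin 6) (Fin 6) ℝ)
    (hder : ∀ i a b : Fin 6,
      (∑ m, D i m * f m a b) = (∑ m, f i m b * D m a) + (∑ m, f i a m * D m b))
    (A : Matrix (Fin 3) (Fin 3) ℂ) (hA : Matrix.trace A = 0) (hDA : D = realRep A) :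
    ∀ a b c d : Fin 7,
      d3 (brg f D) (fun i j k => w21 omega7 eta7 i j k + psi7 i j k) a b c d = 0 := by
  have hbrA : ∀ m x y, brg f D m x y = -brg f D m y x := brg_anti f D hanti
  have hphiA : ∀ m x y, phiG m x y = -phiG m y x := phi_alt
  have hre : (A 0 0).re + (A 1 1).re + (A 2 2).re = 0 := by
    have := congrArg Complex.re hA
    simpa [Matrix.trace, Matrix.diag, Fin.sum_univ_three] using this
  have him : (A 0 0).im + (A 1 1).im + (A 2 2).im = 0 := by
    have := congrArg Complex.im hA
    simpa [Matrix.trace, Matrix.diag, Fin.sum_univ_three] using this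
  have hkey : ∀ a b c : Fin 6, (∑ m, D m a * psi6 m b c)
      - (∑ m, D m b * psi6 m a c) + (∑ m, D m c * psi6 m a b) = 0 := by
    intro a b c; rw [hDA]; exact key A hre him a b c
  have hB : ∀ a b c : Fin 6,
      d3 (brg f D) phiG a.castSucc b.castSucc c.castSucc (Fin.last 6) = 0 := by
    intro a b c
    rw [caseB f D a b c, homega a b c, hkey a b c]; norm_num
  intro a b c d
  show d3 (brg f D) phiG a b c d = 0
  rcases Fin.eq_castSucc_or_eq_last a with ⟨a', rfl⟩ | rfl
  · rcases Fin.eq_castSucc_or_eq_last b with ⟨b', rfl⟩ | rfl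
    · rcases Fin.eq_castSucc_or_eq_last c with ⟨c', rfl⟩ | rfl
      · rcases Fin.eq_castSucc_or_eq_last d with ⟨d', rfl⟩ | rfl
        · rw [caseA]; exact hpsi _ _ _ _
        · exact hB _ _ _
      · rcases Fin.eq_castSucc_or_eq_last d with ⟨d', rfl⟩ | rfl
        · rw [d3_swap_cd _ _ hbrA hphiA]; simp only [hB, neg_zero]
        · exact d3_cd _ _ hbrA hphiA _ _ _
    · rcases Fin.eq_castSucc_or_eq_last c with ⟨c', rfl⟩ | rfl
      · rcases Fin.eq_castSucc_or_eq_last d with ⟨d', rfl⟩ | rfl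
        · rw [d3_swap_bc _ _ hbrA hphiA, d3_swap_cd _ _ hbrA hphiA]; simp only [hB, neg_zero]
        · rw [d3_swap_bc _ _ hbrA hphiA]; simp [d3_cd _ _ hbrA hphiA]
      · exact d3_bc _ _ hbrA hphiA _ _ _
  · rcases Fin.eq_castSucc_or_eq_last b with ⟨b', rfl⟩ | rfl
    · rcases Fin.eq_castSucc_or_eq_last c with ⟨c', rfl⟩ | rfl
      · rcases Fin.eq_castSucc_or_eq_last d with ⟨d', rfl⟩ | rfl
        · rw [d3_swap_ab _ _ hbrA hphiA, d3_swap_bc _ _ hbrA hphiA,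
            d3_swap_cd _ _ hbrA hphiA]; simp only [hB, neg_zero]
        · rw [d3_swap_ab _ _ hbrA hphiA, d3_swap_bc _ _ hbrA hphiA]
          simp [d3_cd _ _ hbrA hphiA]
      · rw [d3_swap_ab _ _ hbrA hphiA]; simp [d3_bc _ _ hbrA hphiA]
    · exact d3_ab _ _ hbrA hphiA _ _ _
end
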